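/- Composition of generalized morphisms and its division map: let 𝔉, 𝒢, ℋ be groupoids, P a generalized morphism from 𝔉 to 𝒢 (data π₁ : P → X_𝔉, ε₁ : P → X_𝒢, division map φ_P) and Q a generalized morphism from 𝒢 to ℋ (data π₂ : Q → X_𝒢, ε₂ : Q → X_ℋ, division map φ_Q). On P ⊙ Q := {(p, q) : ε₁(p) = π₂(q)}, the relation (p, q) ∼ (p', q') iff there exists an arrow g of 𝒢 with t(g) = ε₁(p), p' = p·g and q' = g⁻¹·q, is an equivalence relation. On the quotient P ×_𝒢 Q := (P ⊙ Q)/∼: (i) π̄[p, q] := π₁(p) and ε̄[p, q] := ε₂(q) are well defined and π̄ is surjective; (ii) [p, q]·h := [p, q·h] (when t(h) = ε₂(q)) is a well-defined right ℋ-action with momentum ε̄, free and transitive on the fibers of π̄, whose division map is φ([p₁, q₁], [p₂, q₂]) = φ_Q(q₁, φ_P(p₁, p₂)·q₂) (this formula is independent of the chosen representatives); (iii) f·[p, q] := [f·p, q] (when s(f) = π₁(p)) is a well-defined left 𝔉-action with momentum π̄ making P ×_𝒢 Q a generalized morphism from 𝔉 to ℋ. -/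

import Mathlib

/-- An algebraic groupoid: arrows `G`, objects `X`, source/target maps, units,
inverses, and a multiplication that is "defined" (i.e. satisfies the groupoid
laws) exactly when the source of the first arrow equals the target of the
second. -/
structure AlgGroupoid (G : Type*) (X : Type*) where
  s : G → X
  t : G → X
  ι : X → G
  inv : G → G
  mul : G → G → G
  t_mul : ∀ g₁ g₂, s g₁ = t g₂ → t (mul g₁ g₂) = t g₁
  s_mul : ∀ g₁ g₂, s g₁ = t g₂ → s (mul g₁ g₂) = s g₂
  t_unit : ∀ x, t (ι x) = x
  s_unit : ∀ x, s (ι x) = x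
  unit_mul : ∀ g, mul (ι (t g)) g = g
  mul_unit : ∀ g, mul g (ι (s g)) = g
  s_inv : ∀ g, s (inv g) = t g
  t_inv : ∀ g, t (inv g) = s g
  mul_inv : ∀ g, mul g (inv g) = ι (t g)
  inv_mul : ∀ g, mul (inv g) g = ι (s g)
  mul_assoc : ∀ g₁ g₂ g₃, s g₁ = t g₂ → s g₂ = t g₃ →
    mul (mul g₁ g₂) g₃ = mul g₁ (mul g₂ g₃)

/-- A right principal `𝒢`-bundle over a set `M`: a surjection `π : P → M`, a
momentum `ε : P → X`, and a right action `act p g` whose laws hold exactly when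
`𝒢.t g = ε p`; the action is free and transitive on the fibers of `π`. -/
structure IsPrincipalBundle {G X P M : Type*} (𝒢 : AlgGroupoid G X)
    (π : P → M) (ε : P → X) (act : P → G → P) : Prop where
  π_surj : Function.Surjective π
  ε_act : ∀ p g, 𝒢.t g = ε p → ε (act p g) = 𝒢.s g
  π_act : ∀ p g, 𝒢.t g = ε p → π (act p g) = π p
  act_unit : ∀ p, act p (𝒢.ι (ε p)) = p
  act_mul : ∀ p g g', 𝒢.t g = ε p → 𝒢.s g = 𝒢.t g' →
    act (act p g) g' = act p (𝒢.mul g g')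
  free : ∀ p g, 𝒢.t g = ε p → act p g = p → g = 𝒢.ι (ε p)
  trans : ∀ p q, π p = π q → ∃ g, 𝒢.t g = ε p ∧ act p g = q

/-- The (right) division map of a right principal bundle: the unique map with
`q = p · φ p q` whenever `π p = π q`. -/
def IsDivisionMap {G X P M : Type*} (𝒢 : AlgGroupoid G X)
    (π : P → M) (ε : P → X) (act : P → G → P) (φ : P → P → G) : Prop :=
  ∀ p q, π p = π q → 𝒢.t (φ p q) = ε p ∧ act p (φ p q) = q

/-- A generalized morphism from `𝒢` to `ℋ`: a right principal `ℋ`-bundle over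
`X_𝒢` together with a compatible left `𝒢`-action along `π`. -/
structure IsGeneralizedMorphism {G XG H XH P : Type*}
    (𝒢 : AlgGroupoid G XG) (ℋ : AlgGroupoid H XH)
    (π : P → XG) (ε : P → XH) (act : P → H → P) (lact : G → P → P) : Prop where
  principal : IsPrincipalBundle ℋ π ε act
  π_lact : ∀ g p, 𝒢.s g = π p → π (lact g p) = 𝒢.t g
  lact_unit : ∀ p, lact (𝒢.ι (π p)) p = p
  lact_mul : ∀ g g' p, 𝒢.s g' = π p → 𝒢.s g = 𝒢.t g' →
    lact g (lact g' p) = lact (𝒢.mul g g') p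
  ε_lact : ∀ g p, 𝒢.s g = π p → ε (lact g p) = ε p
  compat : ∀ g p h, 𝒢.s g = π p → ℋ.t h = ε p →
    act (lact g p) h = lact g (act p h)

/-- The total space `P ⊙ Q = {(p, q) : ε₁ p = π₂ q}` underlying the
composition of two generalized morphisms. -/
def GMCompSpace {XG P Q : Type*} (ε₁ : P → XG) (π₂ : Q → XG) : Type _ :=
  {pq : P × Q // ε₁ pq.1 = π₂ pq.2}

/-- The relation `(p, q) ∼ (p·g, g⁻¹·q)` defining the quotient `P ×_𝒢 Q`. -/
def gmCompRel {G XG P Q : Type*} (𝒢 : AlgGroupoid G XG)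
    (ε₁ : P → XG) (π₂ : Q → XG) (actP : P → G → P) (lactQ : G → Q → Q) :
    GMCompSpace ε₁ π₂ → GMCompSpace ε₁ π₂ → Prop :=
  fun pq pq' => ∃ g : G, 𝒢.t g = ε₁ pq.1.1 ∧
    pq'.1.1 = actP pq.1.1 g ∧ pq'.1.2 = lactQ (𝒢.inv g) pq.1.2

open Classical in
/-- The right `ℋ`-action `[p, q]·h := [p, q·h]` on `P ⊙ Q`
(junk value where undefined). -/
noncomputable def gmCompAct {XG H XH P Q : Type*} (ℋ : AlgGroupoid H XH)
    (ε₁ : P → XG) (π₂ : Q → XG) (ε₂ : Q → XH) (actQ : Q → H → Q)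
    (hπ₂ : ∀ q h, ℋ.t h = ε₂ q → π₂ (actQ q h) = π₂ q) :
    GMCompSpace ε₁ π₂ → H → GMCompSpace ε₁ π₂ := fun pq h =>
  if hc : ℋ.t h = ε₂ pq.1.2 then
    ⟨(pq.1.1, actQ pq.1.2 h), by rw [hπ₂ _ _ hc]; exact pq.2⟩
  else pq

open Classical in
/-- The left `𝔉`-action `f·[p, q] := [f·p, q]` on `P ⊙ Q`
(junk value where undefined). -/
noncomputable def gmCompLact {F XF XG P Q : Type*} (𝔉 : AlgGroupoid F XF)
    (π₁ : P → XF) (ε₁ : P → XG) (π₂ : Q → XG) (lactP : F → P → P)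
    (hε₁ : ∀ f p, 𝔉.s f = π₁ p → ε₁ (lactP f p) = ε₁ p) :
    F → GMCompSpace ε₁ π₂ → GMCompSpace ε₁ π₂ := fun f pq =>
  if hc : 𝔉.s f = π₁ pq.1.1 then
    ⟨(lactP f pq.1.1, pq.1.2), by rw [hε₁ _ _ hc]; exact pq.2⟩
  else pq


namespace AlgGroupoid
variable {G X : Type*} (𝒢 : AlgGroupoid G X)

theorem inv_unit (x : X) : 𝒢.inv (𝒢.ι x) = 𝒢.ι x := by
  have h1 := 𝒢.mul_inv (𝒢.ι x)
  have h2 := 𝒢.unit_mul (𝒢.inv (𝒢.ι x))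
  rw [𝒢.t_inv, 𝒢.s_unit] at h2
  rw [𝒢.t_unit] at h1
  rw [h1] at h2
  exact h2.symm

theorem inv_inv (g : G) : 𝒢.inv (𝒢.inv g) = g := by
  have hs : 𝒢.s (𝒢.inv (𝒢.inv g)) = 𝒢.s g := by rw [𝒢.s_inv, 𝒢.t_inv]
  have h1 := 𝒢.mul_assoc (𝒢.inv (𝒢.inv g)) (𝒢.inv g) g (by rw [𝒢.s_inv]) (𝒢.s_inv g)
  rw [𝒢.inv_mul, 𝒢.inv_mul, 𝒢.s_inv, 𝒢.unit_mul, ← hs, 𝒢.mul_unit] at h1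
  exact h1.symm

theorem inv_mul_rev (g g' : G) (h : 𝒢.s g = 𝒢.t g') :
    𝒢.inv (𝒢.mul g g') = 𝒢.mul (𝒢.inv g') (𝒢.inv g) := by
  have hcond : 𝒢.s (𝒢.inv g') = 𝒢.t (𝒢.inv g) := by rw [𝒢.s_inv, 𝒢.t_inv]; exact h.symm
  have htX : 𝒢.t (𝒢.mul (𝒢.inv g') (𝒢.inv g)) = 𝒢.s g' := by
    rw [𝒢.t_mul _ _ hcond, 𝒢.t_inv]
  have e1 : 𝒢.mul g' (𝒢.mul (𝒢.inv g') (𝒢.inv g)) = 𝒢.inv g := by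
    rw [← 𝒢.mul_assoc g' (𝒢.inv g') (𝒢.inv g) (𝒢.t_inv g').symm hcond, 𝒢.mul_inv,
      ← h, ← 𝒢.t_inv g, 𝒢.unit_mul]
  have hA : 𝒢.mul (𝒢.mul g g') (𝒢.mul (𝒢.inv g') (𝒢.inv g)) = 𝒢.ι (𝒢.t g) := by
    rw [𝒢.mul_assoc g g' _ h htX.symm, e1, 𝒢.mul_inv]
  have hsm : 𝒢.s (𝒢.mul g g') = 𝒢.s g' := 𝒢.s_mul g g' h
  have htm : 𝒢.t (𝒢.mul g g') = 𝒢.t g := 𝒢.t_mul g g' h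
  have h2 := 𝒢.mul_assoc (𝒢.inv (𝒢.mul g g')) (𝒢.mul g g') (𝒢.mul (𝒢.inv g') (𝒢.inv g))
    (𝒢.s_inv _) (by rw [hsm, htX])
  rw [hA, 𝒢.inv_mul, hsm, ← htX, 𝒢.unit_mul, ← htm, ← 𝒢.s_inv (𝒢.mul g g'), 𝒢.mul_unit] at h2
  exact h2.symm

end AlgGroupoid

theorem div_unique {G X P M : Type*} {𝒢 : AlgGroupoid G X} {π : P → M} {ε : P → X}
    {act : P → G → P} (hB : IsPrincipalBundle 𝒢 π ε act) {φ : P → P → G}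
    (hφ : IsDivisionMap 𝒢 π ε act φ) {p q : P} {h : G} (hπ : π p = π q)
    (ht : 𝒢.t h = ε p) (ha : act p h = q) : h = φ p q := by
  obtain ⟨htk, hak⟩ := hφ p q hπ
  set k := φ p q with hk
  have hs : 𝒢.s h = 𝒢.s k := by
    rw [← hB.ε_act p h ht, ← hB.ε_act p k htk, ha, hak]
  have e1 : act q (𝒢.inv k) = p := by
    rw [← hak, hB.act_mul p k (𝒢.inv k) htk (𝒢.t_inv k).symm, 𝒢.mul_inv, htk, hB.act_unit]
  have e2 : act p (𝒢.mul h (𝒢.inv k)) = p := by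
    rw [← hB.act_mul p h (𝒢.inv k) ht (by rw [𝒢.t_inv, hs]), ha, e1]
  have e3 : 𝒢.mul h (𝒢.inv k) = 𝒢.ι (ε p) :=
    hB.free p _ (by rw [𝒢.t_mul h (𝒢.inv k) (by rw [𝒢.t_inv, hs]), ht]) e2
  calc h = 𝒢.mul h (𝒢.ι (𝒢.s h)) := (𝒢.mul_unit h).symm
    _ = 𝒢.mul h (𝒢.mul (𝒢.inv k) k) := by rw [𝒢.inv_mul, hs]
    _ = 𝒢.mul (𝒢.mul h (𝒢.inv k)) k :=
        (𝒢.mul_assoc h (𝒢.inv k) k (by rw [𝒢.t_inv, hs]) (𝒢.s_inv k)).symm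
    _ = 𝒢.mul (𝒢.ι (ε p)) k := by rw [e3]
    _ = k := by rw [← htk, 𝒢.unit_mul]

/-- **Composition of generalized morphisms and its division map.**  Let `P`
be a generalized morphism from `𝔉` to `𝒢` and `Q` a generalized morphism
from `𝒢` to `ℋ`.  Then on `P ⊙ Q = {(p, q) : ε₁ p = π₂ q}` the relation
`(p, q) ∼ (p·g, g⁻¹·q)` is an equivalence relation, and on the quotient
`P ×_𝒢 Q`: the projection `[p, q] ↦ π₁ p` and momentum `[p, q] ↦ ε₂ q` are
well defined, the projection is surjective; `[p, q]·h := [p, q·h]` is a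
well-defined right `ℋ`-action which is principal (momentum law, invariance,
unit, associativity, freeness and transitivity on fibers of the projection)
with division map `φ([p₁,q₁],[p₂,q₂]) = φ_Q (q₁, φ_P (p₁,p₂)·q₂)`
(independent of representatives); and `f·[p, q] := [f·p, q]` is a
well-defined compatible left `𝔉`-action, making `P ×_𝒢 Q` a generalized
morphism from `𝔉` to `ℋ`. -/
theorem composition_of_generalized_morphisms
    {F XF G XG H XH P Q : Type*}
    (𝔉 : AlgGroupoid F XF) (𝒢 : AlgGroupoid G XG) (ℋ : AlgGroupoid H XH)
    (π₁ : P → XF) (ε₁ : P → XG) (actP : P → G → P) (lactP : F → P → P)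
    (π₂ : Q → XG) (ε₂ : Q → XH) (actQ : Q → H → Q) (lactQ : G → Q → Q)
    (hP : IsGeneralizedMorphism 𝔉 𝒢 π₁ ε₁ actP lactP)
    (hQ : IsGeneralizedMorphism 𝒢 ℋ π₂ ε₂ actQ lactQ)
    (φP : P → P → G) (hφP : IsDivisionMap 𝒢 π₁ ε₁ actP φP)
    (φQ : Q → Q → H) (hφQ : IsDivisionMap ℋ π₂ ε₂ actQ φQ) :
    -- the relation is an equivalence relation
    Equivalence (gmCompRel 𝒢 ε₁ π₂ actP lactQ) ∧
    -- (i) projection and momentum are well defined, projection surjective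
    (∀ pq pq', gmCompRel 𝒢 ε₁ π₂ actP lactQ pq pq' → π₁ pq.1.1 = π₁ pq'.1.1) ∧
    (∀ pq pq', gmCompRel 𝒢 ε₁ π₂ actP lactQ pq pq' → ε₂ pq.1.2 = ε₂ pq'.1.2) ∧
    Function.Surjective (fun pq : GMCompSpace ε₁ π₂ => π₁ pq.1.1) ∧
    -- (ii) the right ℋ-action descends to the quotient ...
    (∀ pq pq' h, gmCompRel 𝒢 ε₁ π₂ actP lactQ pq pq' → ℋ.t h = ε₂ pq.1.2 →
      gmCompRel 𝒢 ε₁ π₂ actP lactQ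
        (gmCompAct ℋ ε₁ π₂ ε₂ actQ hQ.principal.π_act pq h)
        (gmCompAct ℋ ε₁ π₂ ε₂ actQ hQ.principal.π_act pq' h)) ∧
    -- ... with momentum ε₂ ...
    (∀ pq h, ℋ.t h = ε₂ pq.1.2 →
      ε₂ ((gmCompAct ℋ ε₁ π₂ ε₂ actQ hQ.principal.π_act pq h).1.2) = ℋ.s h) ∧
    -- ... leaving the projection invariant ...
    (∀ pq h, ℋ.t h = ε₂ pq.1.2 →
      π₁ ((gmCompAct ℋ ε₁ π₂ ε₂ actQ hQ.principal.π_act pq h).1.1) = π₁ pq.1.1) ∧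
    -- ... unit and associativity laws ...
    (∀ pq, gmCompAct ℋ ε₁ π₂ ε₂ actQ hQ.principal.π_act pq (ℋ.ι (ε₂ pq.1.2)) = pq) ∧
    (∀ pq h h', ℋ.t h = ε₂ pq.1.2 → ℋ.s h = ℋ.t h' →
      gmCompAct ℋ ε₁ π₂ ε₂ actQ hQ.principal.π_act
          (gmCompAct ℋ ε₁ π₂ ε₂ actQ hQ.principal.π_act pq h) h' =
        gmCompAct ℋ ε₁ π₂ ε₂ actQ hQ.principal.π_act pq (ℋ.mul h h')) ∧
    -- ... free on the quotient ...
    (∀ pq h, ℋ.t h = ε₂ pq.1.2 →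
      gmCompRel 𝒢 ε₁ π₂ actP lactQ
        (gmCompAct ℋ ε₁ π₂ ε₂ actQ hQ.principal.π_act pq h) pq →
      h = ℋ.ι (ε₂ pq.1.2)) ∧
    -- ... transitive on the fibers of the projection, with division map
    -- φ([p₁,q₁],[p₂,q₂]) = φ_Q (q₁, φ_P (p₁,p₂)·q₂) ...
    (∀ pq pq', π₁ pq.1.1 = π₁ pq'.1.1 →
      ℋ.t (φQ pq.1.2 (lactQ (φP pq.1.1 pq'.1.1) pq'.1.2)) = ε₂ pq.1.2 ∧
      gmCompRel 𝒢 ε₁ π₂ actP lactQ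
        (gmCompAct ℋ ε₁ π₂ ε₂ actQ hQ.principal.π_act pq
          (φQ pq.1.2 (lactQ (φP pq.1.1 pq'.1.1) pq'.1.2))) pq') ∧
    -- ... whose formula is independent of the chosen representatives ...
    (∀ pq pq' rr ss, π₁ pq.1.1 = π₁ pq'.1.1 →
      gmCompRel 𝒢 ε₁ π₂ actP lactQ pq rr → gmCompRel 𝒢 ε₁ π₂ actP lactQ pq' ss →
      φQ pq.1.2 (lactQ (φP pq.1.1 pq'.1.1) pq'.1.2) =
        φQ rr.1.2 (lactQ (φP rr.1.1 ss.1.1) ss.1.2)) ∧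
    -- (iii) the left 𝔉-action descends to the quotient ...
    (∀ f pq pq', 𝔉.s f = π₁ pq.1.1 → gmCompRel 𝒢 ε₁ π₂ actP lactQ pq pq' →
      gmCompRel 𝒢 ε₁ π₂ actP lactQ
        (gmCompLact 𝔉 π₁ ε₁ π₂ lactP hP.ε_lact f pq)
        (gmCompLact 𝔉 π₁ ε₁ π₂ lactP hP.ε_lact f pq')) ∧
    -- ... with momentum the projection ...
    (∀ f pq, 𝔉.s f = π₁ pq.1.1 →
      π₁ ((gmCompLact 𝔉 π₁ ε₁ π₂ lactP hP.ε_lact f pq).1.1) = 𝔉.t f) ∧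
    -- ... unit and associativity laws ...
    (∀ pq, gmCompLact 𝔉 π₁ ε₁ π₂ lactP hP.ε_lact (𝔉.ι (π₁ pq.1.1)) pq = pq) ∧
    (∀ f f' pq, 𝔉.s f' = π₁ pq.1.1 → 𝔉.s f = 𝔉.t f' →
      gmCompLact 𝔉 π₁ ε₁ π₂ lactP hP.ε_lact f
          (gmCompLact 𝔉 π₁ ε₁ π₂ lactP hP.ε_lact f' pq) =
        gmCompLact 𝔉 π₁ ε₁ π₂ lactP hP.ε_lact (𝔉.mul f f') pq) ∧
    -- ... leaving the momentum ε₂ invariant ...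
    (∀ f pq, 𝔉.s f = π₁ pq.1.1 →
      ε₂ ((gmCompLact 𝔉 π₁ ε₁ π₂ lactP hP.ε_lact f pq).1.2) = ε₂ pq.1.2) ∧
    -- ... and commuting with the right ℋ-action.
    (∀ f pq h, 𝔉.s f = π₁ pq.1.1 → ℋ.t h = ε₂ pq.1.2 →
      gmCompAct ℋ ε₁ π₂ ε₂ actQ hQ.principal.π_act
          (gmCompLact 𝔉 π₁ ε₁ π₂ lactP hP.ε_lact f pq) h =
        gmCompLact 𝔉 π₁ ε₁ π₂ lactP hP.ε_lact f
          (gmCompAct ℋ ε₁ π₂ ε₂ actQ hQ.principal.π_act pq h)) := by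
  have hPB := hP.principal
  have hQB := hQ.principal
  -- unfolding lemmas for the dite-defined actions
  have hact : ∀ (pq : GMCompSpace ε₁ π₂) (h : H) (hc : ℋ.t h = ε₂ pq.1.2),
      gmCompAct ℋ ε₁ π₂ ε₂ actQ hQ.principal.π_act pq h =
        ⟨(pq.1.1, actQ pq.1.2 h), by rw [hQ.principal.π_act _ _ hc]; exact pq.2⟩ := by
    intro pq h hc
    simp only [gmCompAct]
    exact dif_pos hc
  have hlact : ∀ (f : F) (pq : GMCompSpace ε₁ π₂) (hc : 𝔉.s f = π₁ pq.1.1),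
      gmCompLact 𝔉 π₁ ε₁ π₂ lactP hP.ε_lact f pq =
        ⟨(lactP f pq.1.1, pq.1.2), by rw [hP.ε_lact _ _ hc]; exact pq.2⟩ := by
    intro f pq hc
    simp only [gmCompLact]
    exact dif_pos hc
  -- reflexivity
  have hrefl : ∀ pq : GMCompSpace ε₁ π₂, gmCompRel 𝒢 ε₁ π₂ actP lactQ pq pq := by
    rintro ⟨⟨p, q⟩, hpq⟩
    refine ⟨𝒢.ι (ε₁ p), 𝒢.t_unit _, (hPB.act_unit p).symm, ?_⟩
    dsimp only at hpq ⊢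
    rw [𝒢.inv_unit, hpq, hQ.lact_unit]
  -- symmetry
  have hsymm : ∀ pq pq', gmCompRel 𝒢 ε₁ π₂ actP lactQ pq pq' →
      gmCompRel 𝒢 ε₁ π₂ actP lactQ pq' pq := by
    rintro ⟨⟨p, q⟩, hpq⟩ ⟨⟨p', q'⟩, hpq'⟩ ⟨g, htg, hp', hq'⟩
    replace htg : 𝒢.t g = ε₁ p := htg
    replace hp' : p' = actP p g := hp'
    replace hq' : q' = lactQ (𝒢.inv g) q := hq'
    replace hpq : ε₁ p = π₂ q := hpq
    refine ⟨𝒢.inv g, ?_, ?_, ?_⟩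
    · show 𝒢.t (𝒢.inv g) = ε₁ p'
      rw [𝒢.t_inv, hp', hPB.ε_act _ _ htg]
    · show p = actP p' (𝒢.inv g)
      rw [hp', hPB.act_mul p g (𝒢.inv g) htg (𝒢.t_inv g).symm, 𝒢.mul_inv, htg, hPB.act_unit]
    · show q = lactQ (𝒢.inv (𝒢.inv g)) q'
      rw [𝒢.inv_inv, hq',
        hQ.lact_mul g (𝒢.inv g) q (by rw [𝒢.s_inv, htg, hpq]) (𝒢.t_inv g).symm,
        𝒢.mul_inv, htg, hpq, hQ.lact_unit]
  -- transitivity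
  have htrans : ∀ pq pq' pq'', gmCompRel 𝒢 ε₁ π₂ actP lactQ pq pq' →
      gmCompRel 𝒢 ε₁ π₂ actP lactQ pq' pq'' → gmCompRel 𝒢 ε₁ π₂ actP lactQ pq pq'' := by
    rintro ⟨⟨p, q⟩, hpq⟩ ⟨⟨p', q'⟩, hpq'⟩ ⟨⟨p'', q''⟩, hpq''⟩
      ⟨g, htg, hp', hq'⟩ ⟨g', htg', hp'', hq''⟩
    replace htg : 𝒢.t g = ε₁ p := htg
    replace hp' : p' = actP p g := hp'
    replace hq' : q' = lactQ (𝒢.inv g) q := hq'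
    replace htg' : 𝒢.t g' = ε₁ p' := htg'
    replace hp'' : p'' = actP p' g' := hp''
    replace hq'' : q'' = lactQ (𝒢.inv g') q' := hq''
    replace hpq : ε₁ p = π₂ q := hpq
    have hsg : 𝒢.s g = 𝒢.t g' := by rw [htg', hp', hPB.ε_act _ _ htg]
    refine ⟨𝒢.mul g g', ?_, ?_, ?_⟩
    · show 𝒢.t (𝒢.mul g g') = ε₁ p
      rw [𝒢.t_mul _ _ hsg, htg]
    · show p'' = actP p (𝒢.mul g g')
      rw [hp'', hp', hPB.act_mul _ _ _ htg hsg]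
    · show q'' = lactQ (𝒢.inv (𝒢.mul g g')) q
      rw [hq'', hq', 𝒢.inv_mul_rev _ _ hsg]
      exact hQ.lact_mul (𝒢.inv g') (𝒢.inv g) q (by rw [𝒢.s_inv, htg, hpq])
        (by rw [𝒢.s_inv, 𝒢.t_inv, hsg])
  -- well-definedness of the projection and momentum
  have hπwd : ∀ pq pq', gmCompRel 𝒢 ε₁ π₂ actP lactQ pq pq' → π₁ pq.1.1 = π₁ pq'.1.1 := by
    rintro ⟨⟨p, q⟩, hpq⟩ ⟨⟨p', q'⟩, hpq'⟩ ⟨g, htg, hp', hq'⟩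
    replace htg : 𝒢.t g = ε₁ p := htg
    replace hp' : p' = actP p g := hp'
    show π₁ p = π₁ p'
    rw [hp', hPB.π_act _ _ htg]
  have hεwd : ∀ pq pq', gmCompRel 𝒢 ε₁ π₂ actP lactQ pq pq' → ε₂ pq.1.2 = ε₂ pq'.1.2 := by
    rintro ⟨⟨p, q⟩, hpq⟩ ⟨⟨p', q'⟩, hpq'⟩ ⟨g, htg, hp', hq'⟩
    replace htg : 𝒢.t g = ε₁ p := htg
    replace hq' : q' = lactQ (𝒢.inv g) q := hq'
    replace hpq : ε₁ p = π₂ q := hpq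
    show ε₂ q = ε₂ q'
    rw [hq', hQ.ε_lact _ _ (by rw [𝒢.s_inv, htg, hpq])]
  refine ⟨⟨hrefl, fun {a b} h => hsymm a b h, fun {a b c} h h' => htrans a b c h h'⟩,
    hπwd, hεwd, ?_, ?_, ?_, ?_, ?_, ?_, ?_, ?_, ?_, ?_, ?_, ?_, ?_, ?_, ?_⟩
  · -- surjectivity
    intro x
    obtain ⟨p, hp⟩ := hPB.π_surj x
    obtain ⟨q, hq⟩ := hQB.π_surj (ε₁ p)
    exact ⟨⟨(p, q), hq.symm⟩, hp⟩
  · -- right action descends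
    rintro pq pq' h hrel hc
    have hc' : ℋ.t h = ε₂ pq'.1.2 := by rw [hc, hεwd _ _ hrel]
    obtain ⟨g, htg, hp', hq'⟩ := hrel
    rw [hact pq h hc, hact pq' h hc']
    refine ⟨g, htg, hp', ?_⟩
    dsimp only
    rw [hq', hQ.compat (𝒢.inv g) pq.1.2 h (by rw [𝒢.s_inv, htg, pq.2]) hc]
  · -- momentum law
    intro pq h hc
    rw [hact pq h hc]
    exact hQB.ε_act _ _ hc
  · -- projection invariance
    intro pq h hc
    rw [hact pq h hc]
  · -- unit law
    intro pq
    rw [hact pq _ (ℋ.t_unit _)]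
    exact Subtype.ext (by dsimp only; rw [hQB.act_unit])
  · -- associativity
    intro pq h h' hc hs
    have hc' : ℋ.t h' = ε₂ (actQ pq.1.2 h) := by rw [hQB.ε_act _ _ hc]; exact hs.symm
    have hcm : ℋ.t (ℋ.mul h h') = ε₂ pq.1.2 := by rw [ℋ.t_mul _ _ hs, hc]
    rw [hact pq h hc, hact ⟨(pq.1.1, actQ pq.1.2 h), by rw [hQB.π_act _ _ hc]; exact pq.2⟩ h' hc', hact pq _ hcm]
    exact Subtype.ext (by dsimp only; rw [hQB.act_mul _ _ _ hc hs])
  · -- freeness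
    intro pq h hc hrel
    rw [hact pq h hc] at hrel
    obtain ⟨g, htg, hp, hq⟩ := hrel
    dsimp only at htg hp hq
    have hg : g = 𝒢.ι (ε₁ pq.1.1) := hPB.free _ _ htg hp.symm
    rw [hg, 𝒢.inv_unit] at hq
    have hπa : ε₁ pq.1.1 = π₂ (actQ pq.1.2 h) := by rw [hQB.π_act _ _ hc]; exact pq.2
    rw [hπa, hQ.lact_unit] at hq
    exact hQB.free _ _ hc hq.symm
  · -- transitivity on fibers with the division map formula
    rintro pq pq' hππ
    obtain ⟨htg, hag⟩ := hφP _ _ hππ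
    set g := φP pq.1.1 pq'.1.1 with hgdef
    have hsg : 𝒢.s g = π₂ pq'.1.2 := by
      rw [← hPB.ε_act _ _ htg, hag]; exact pq'.2
    have hπlq : π₂ (lactQ g pq'.1.2) = π₂ pq.1.2 := by
      rw [hQ.π_lact _ _ hsg, htg, pq.2]
    obtain ⟨hth, haq⟩ := hφQ pq.1.2 (lactQ g pq'.1.2) hπlq.symm
    refine ⟨hth, ?_⟩
    rw [hact pq _ hth]
    refine ⟨g, htg, hag.symm, ?_⟩
    dsimp only
    rw [haq, hQ.lact_mul (𝒢.inv g) g pq'.1.2 hsg (𝒢.s_inv g), 𝒢.inv_mul, hsg, hQ.lact_unit]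
  · -- independence of representatives
    rintro pq pq' rr ss hππ hr hs
    obtain ⟨a, hta, hr1, hr2⟩ := hr
    obtain ⟨b, htb, hs1, hs2⟩ := hs
    obtain ⟨htg, hag⟩ := hφP _ _ hππ
    set g := φP pq.1.1 pq'.1.1 with hgdef
    have hsg : 𝒢.s g = π₂ pq'.1.2 := by
      rw [← hPB.ε_act _ _ htg, hag]; exact pq'.2
    have hsgtb : 𝒢.s g = 𝒢.t b := by rw [hsg, ← pq'.2, htb]
    have hπlq : π₂ (lactQ g pq'.1.2) = π₂ pq.1.2 := by
      rw [hQ.π_lact _ _ hsg, htg, pq.2]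
    obtain ⟨hth, haq⟩ := hφQ pq.1.2 (lactQ g pq'.1.2) hπlq.symm
    set h := φQ pq.1.2 (lactQ g pq'.1.2) with hhdef
    -- the new arrow in 𝒢 between the new representatives
    have htgb : 𝒢.t (𝒢.mul g b) = ε₁ pq.1.1 := by rw [𝒢.t_mul _ _ hsgtb, htg]
    have hcassoc : 𝒢.s (𝒢.inv a) = 𝒢.t (𝒢.mul g b) := by rw [𝒢.s_inv, hta, htgb]
    have hππnew : π₁ rr.1.1 = π₁ ss.1.1 := by
      rw [hr1, hs1, hPB.π_act _ _ hta, hPB.π_act _ _ htb, hππ]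
    have hg2 : 𝒢.mul (𝒢.inv a) (𝒢.mul g b) = φP rr.1.1 ss.1.1 := by
      refine div_unique hPB hφP hππnew ?_ ?_
      · rw [𝒢.t_mul _ _ hcassoc, 𝒢.t_inv, hr1, hPB.ε_act _ _ hta]
      · rw [hr1, hPB.act_mul _ _ _ hta (by rw [𝒢.t_mul _ _ hcassoc, 𝒢.t_inv]),
          ← 𝒢.mul_assoc a (𝒢.inv a) (𝒢.mul g b) (𝒢.t_inv a).symm hcassoc,
          𝒢.mul_inv, hta, ← htgb, 𝒢.unit_mul, hs1,
          ← hPB.act_mul _ _ _ htg hsgtb, hag]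
    -- ε₂ and π₂ of the new representatives
    have hεr2 : ε₂ rr.1.2 = ε₂ pq.1.2 := by
      rw [hr2, hQ.ε_lact _ _ (by rw [𝒢.s_inv, hta, pq.2])]
    have hπr2 : π₂ rr.1.2 = 𝒢.s a := by
      rw [hr2, hQ.π_lact _ _ (by rw [𝒢.s_inv, hta, pq.2]), 𝒢.t_inv]
    have hsinvb : 𝒢.s (𝒢.inv b) = π₂ pq'.1.2 := by rw [𝒢.s_inv, htb, pq'.2]
    have hπs2 : π₂ ss.1.2 = 𝒢.s b := by rw [hs2, hQ.π_lact _ _ hsinvb, 𝒢.t_inv]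
    -- the action of the candidate arrow
    have hcompat : actQ rr.1.2 h = lactQ (𝒢.inv a) (lactQ g pq'.1.2) := by
      rw [hr2, hQ.compat (𝒢.inv a) pq.1.2 h (by rw [𝒢.s_inv, hta, pq.2]) hth, haq]
    have hrs : lactQ (𝒢.mul (𝒢.inv a) (𝒢.mul g b)) ss.1.2 =
        lactQ (𝒢.inv a) (lactQ g pq'.1.2) := by
      rw [hs2, ← hQ.lact_mul (𝒢.inv a) (𝒢.mul g b) (lactQ (𝒢.inv b) pq'.1.2)
          (by rw [𝒢.s_mul _ _ hsgtb, hQ.π_lact _ _ hsinvb, 𝒢.t_inv]) hcassoc,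
        ← hQ.lact_mul g b (lactQ (𝒢.inv b) pq'.1.2)
          (by rw [hQ.π_lact _ _ hsinvb, 𝒢.t_inv]) hsgtb,
        hQ.lact_mul b (𝒢.inv b) pq'.1.2 hsinvb (𝒢.t_inv b).symm,
        𝒢.mul_inv, htb, pq'.2, hQ.lact_unit]
    have hπnew : π₂ rr.1.2 = π₂ (lactQ (φP rr.1.1 ss.1.1) ss.1.2) := by
      rw [← hg2, hπr2, hQ.π_lact _ _ (by rw [𝒢.s_mul _ _ hcassoc, 𝒢.s_mul _ _ hsgtb, hπs2]),
        𝒢.t_mul _ _ hcassoc, 𝒢.t_inv]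
    refine div_unique hQB hφQ hπnew (by rw [hεr2]; exact hth) ?_
    rw [hcompat, ← hg2, hrs]
  · -- left action descends
    rintro f pq pq' hf hrel
    have hf' : 𝔉.s f = π₁ pq'.1.1 := by rw [hf, hπwd _ _ hrel]
    obtain ⟨g, htg, hp', hq'⟩ := hrel
    rw [hlact f pq hf, hlact f pq' hf']
    refine ⟨g, ?_, ?_, hq'⟩
    · dsimp only
      rw [hP.ε_lact _ _ hf, htg]
    · dsimp only
      rw [hp', hP.compat f pq.1.1 g hf htg]
  · -- left momentum
    intro f pq hf
    rw [hlact f pq hf]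
    exact hP.π_lact _ _ hf
  · -- left unit
    intro pq
    rw [hlact _ pq (by rw [𝔉.s_unit])]
    exact Subtype.ext (by dsimp only; rw [hP.lact_unit])
  · -- left associativity
    intro f f' pq hf' hff'
    have h1 : 𝔉.s f = π₁ (lactP f' pq.1.1) := by rw [hP.π_lact _ _ hf', hff']
    have h2 : 𝔉.s (𝔉.mul f f') = π₁ pq.1.1 := by rw [𝔉.s_mul _ _ hff', hf']
    rw [hlact f' pq hf', hlact f ⟨(lactP f' pq.1.1, pq.1.2), by rw [hP.ε_lact _ _ hf']; exact pq.2⟩ h1, hlact _ pq h2]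
    exact Subtype.ext (by dsimp only; rw [hP.lact_mul _ _ _ hf' hff'])
  · -- ε₂ invariance of the left action
    intro f pq hf
    rw [hlact f pq hf]
  · -- compatibility of the two actions
    intro f pq h hf hc
    have h1 : ℋ.t h = ε₂ (gmCompLact 𝔉 π₁ ε₁ π₂ lactP hP.ε_lact f pq).1.2 := by
      rw [hlact f pq hf]; exact hc
    have h2 : 𝔉.s f = π₁ (gmCompAct ℋ ε₁ π₂ ε₂ actQ hQ.principal.π_act pq h).1.1 := by
      rw [hact pq h hc]; exact hf
    refine Subtype.ext ?_
    rw [hact _ h h1, hlact f _ h2]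
    dsimp only
    rw [hlact f pq hf, hact pq h hc]
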